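/- For any sorting match puzzle (r, c) of order n ≥ 2, the minimum over all solvable puzzles (r*, c*) of the total Hamming distance ‖r,r*‖ + ‖c,c*‖ equals the minimum of the four quantities: min(totalA(r), n − totalA(r)); min(totalA(c), n − totalA(c)); min_k d(r, A^k D^{n−k}) + min_ℓ d(c, A^ℓ D^{n−ℓ}); and min_k d(r, D^k A^{n−k}) + min_ℓ d(c, D^ℓ A^{n−ℓ}), where k, ℓ range over 0,…,n. -/

import Mathlib

/-- A solution of the sorting match puzzle `(r, c)` of order `n`:
a bijective filling of the grid respecting all row and column labels. -/
def IsSolution (n : ℕ) (r c : Fin n → Bool) (g : Fin n × Fin n → Fin (n ^ 2)) : Prop :=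
  Function.Bijective g ∧
  (∀ i : Fin n, if r i = true then StrictMono (fun j => g (i, j))
                else StrictAnti (fun j => g (i, j))) ∧
  (∀ j : Fin n, if c j = true then StrictMono (fun i => g (i, j))
                else StrictAnti (fun i => g (i, j)))

/-- Solvability of the sorting match puzzle `(r, c)`. -/
def Solvable (n : ℕ) (r c : Fin n → Bool) : Prop :=
  ∃ g : Fin n × Fin n → Fin (n ^ 2), IsSolution n r c g

open Finset

/-- Hamming distance between two label strings. -/
def hamming (n : ℕ) (s t : Fin n → Bool) : ℕ :=
  (univ.filter fun i : Fin n => s i ≠ t i).card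

/-- Number of `A` labels in a string. -/
def totalA (n : ℕ) (s : Fin n → Bool) : ℕ :=
  (univ.filter fun i : Fin n => s i = true).card

/- ### Auxiliary arithmetic lemmas -/

private lemma addmul_lt {n : ℕ} {a a' b b' : ℤ} (h0 : 0 ≤ b') (h1 : b < n)
    (h : a < a') : a * n + b < a' * n + b' := by
  have hn : (0:ℤ) ≤ n := Int.ofNat_nonneg n
  have h2 : (a + 1) * n ≤ a' * n := mul_le_mul_of_nonneg_right (Int.add_one_le_iff.mpr h) hn
  nlinarith

private lemma addmul_inj {n : ℕ} {a a' b b' : ℤ} (h0 : 0 ≤ b) (h1 : b < n)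
    (h2 : 0 ≤ b') (h3 : b' < n) (h : a * n + b = a' * n + b') : a = a' ∧ b = b' := by
  have ha : a = a' := by
    by_contra hne
    rcases lt_or_gt_of_ne hne with hlt | hlt
    · exact absurd h (ne_of_lt (addmul_lt h2 h1 hlt))
    · exact absurd h.symm (ne_of_lt (addmul_lt h0 h3 hlt))
  subst ha
  exact ⟨rfl, by linarith⟩

/- ### Building a solution from an injective integer key -/

lemma solvable_of_key {n : ℕ} (r c : Fin n → Bool) (K : Fin n × Fin n → ℤ)
    (hinj : Function.Injective K)
    (hrow : ∀ (i j j' : Fin n), j < j' →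
      if r i = true then K (i, j) < K (i, j') else K (i, j') < K (i, j))
    (hcol : ∀ (i i' j : Fin n), i < i' →
      if c j = true then K (i, j) < K (i', j) else K (i', j) < K (i, j)) :
    Solvable n r c := by
  classical
  have hcard : (Finset.image K Finset.univ).card = n ^ 2 := by
    rw [Finset.card_image_of_injective _ hinj, Finset.card_univ]
    simp [sq]
  set S : Finset ℤ := Finset.image K Finset.univ with hS
  let e := S.orderIsoOfFin hcard
  have hmem : ∀ p, K p ∈ S := fun p => Finset.mem_image_of_mem _ (Finset.mem_univ p)
  set g : Fin n × Fin n → Fin (n ^ 2) := fun p => e.symm ⟨K p, hmem p⟩ with hg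
  have hlt : ∀ p q, g p < g q ↔ K p < K q := by
    intro p q
    simp only [hg]
    rw [OrderIso.lt_iff_lt]
    exact Subtype.mk_lt_mk
  refine ⟨g, ⟨?_, ?_⟩, ?_, ?_⟩
  · intro p q h
    simp only [hg] at h
    exact hinj (Subtype.ext_iff.mp (e.symm.injective h))
  · intro m
    obtain ⟨p, -, hp⟩ := Finset.mem_image.mp (e m).2
    refine ⟨p, ?_⟩
    simp only [hg]
    rw [show (⟨K p, hmem p⟩ : {x // x ∈ S}) = e m from Subtype.ext hp,
      OrderIso.symm_apply_apply]
  · intro i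
    by_cases h : r i = true
    · rw [if_pos h]
      intro j j' hj
      exact (hlt _ _).mpr (by have := hrow i j j' hj; rwa [if_pos h] at this)
    · rw [if_neg h]
      intro j j' hj
      exact (hlt _ _).mpr (by have := hrow i j j' hj; rwa [if_neg h] at this)
  · intro j
    by_cases h : c j = true
    · rw [if_pos h]
      intro i i' hi
      exact (hlt _ _).mpr (by have := hcol i i' j hi; rwa [if_pos h] at this)
    · rw [if_neg h]
      intro i i' hi
      exact (hlt _ _).mpr (by have := hcol i i' j hi; rwa [if_neg h] at this)

/- ### Explicit solvable families -/

lemma solvable_row_const (n : ℕ) (b : Bool) (c : Fin n → Bool) :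
    Solvable n (fun _ => b) c := by
  apply solvable_of_key (fun _ => b) c
    (fun p => (if b = true then (p.2.val : ℤ) else -(p.2.val : ℤ)) * n +
      (if c p.2 = true then (p.1.val : ℤ) else (n : ℤ) - 1 - p.1.val))
  · rintro ⟨i, j⟩ ⟨i', j'⟩ h
    simp only at h
    have hi := i.isLt; have hi' := i'.isLt
    have h1 : (0:ℤ) ≤ (if c j = true then (i.val : ℤ) else (n : ℤ) - 1 - i.val) := by
      split <;> omega
    have h2 : (if c j = true then (i.val : ℤ) else (n : ℤ) - 1 - i.val) < n := by
      split <;> omega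
    have h3 : (0:ℤ) ≤ (if c j' = true then (i'.val : ℤ) else (n : ℤ) - 1 - i'.val) := by
      split <;> omega
    have h4 : (if c j' = true then (i'.val : ℤ) else (n : ℤ) - 1 - i'.val) < n := by
      split <;> omega
    obtain ⟨hA, hB⟩ := addmul_inj h1 h2 h3 h4 h
    have hj : j = j' := by
      cases b <;> simp at hA <;> exact Fin.ext (by omega)
    subst hj
    have hii : i = i' := by
      split at hB <;> exact Fin.ext (by omega)
    rw [hii]
  · intro i j j' hj
    have hjv : (j.val : ℤ) < (j'.val : ℤ) := by exact_mod_cast hj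
    have hi := i.isLt
    have h1 : (0:ℤ) ≤ (if c j = true then (i.val : ℤ) else (n : ℤ) - 1 - i.val) := by
      split <;> omega
    have h2 : (if c j = true then (i.val : ℤ) else (n : ℤ) - 1 - i.val) < n := by
      split <;> omega
    have h3 : (0:ℤ) ≤ (if c j' = true then (i.val : ℤ) else (n : ℤ) - 1 - i.val) := by
      split <;> omega
    have h4 : (if c j' = true then (i.val : ℤ) else (n : ℤ) - 1 - i.val) < n := by
      split <;> omega
    cases b
    · simp only [Bool.false_eq_true, if_false]
      exact addmul_lt h1 h4 (by omega)
    · simp only [if_true]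
      exact addmul_lt h3 h2 (by omega)
  · intro i i' j hi
    have hiv : (i.val : ℤ) < (i'.val : ℤ) := by exact_mod_cast hi
    have hi2 := i'.isLt
    by_cases hc : c j = true
    · rw [if_pos hc]
      simp only [if_pos hc]
      exact (add_lt_add_iff_left _).mpr hiv
    · rw [if_neg hc]
      simp only [if_neg hc]
      exact (add_lt_add_iff_left _).mpr (by omega)

lemma solvable_col_const (n : ℕ) (b : Bool) (r : Fin n → Bool) :
    Solvable n r (fun _ => b) := by
  apply solvable_of_key r (fun _ => b)
    (fun p => (if b = true then (p.1.val : ℤ) else -(p.1.val : ℤ)) * n +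
      (if r p.1 = true then (p.2.val : ℤ) else (n : ℤ) - 1 - p.2.val))
  · rintro ⟨i, j⟩ ⟨i', j'⟩ h
    simp only at h
    have hj := j.isLt; have hj' := j'.isLt
    have h1 : (0:ℤ) ≤ (if r i = true then (j.val : ℤ) else (n : ℤ) - 1 - j.val) := by
      split <;> omega
    have h2 : (if r i = true then (j.val : ℤ) else (n : ℤ) - 1 - j.val) < n := by
      split <;> omega
    have h3 : (0:ℤ) ≤ (if r i' = true then (j'.val : ℤ) else (n : ℤ) - 1 - j'.val) := by
      split <;> omega
    have h4 : (if r i' = true then (j'.val : ℤ) else (n : ℤ) - 1 - j'.val) < n := by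
      split <;> omega
    obtain ⟨hA, hB⟩ := addmul_inj h1 h2 h3 h4 h
    have hii : i = i' := by
      cases b <;> simp at hA <;> exact Fin.ext (by omega)
    subst hii
    have hjj : j = j' := by
      split at hB <;> exact Fin.ext (by omega)
    rw [hjj]
  · intro i j j' hj
    have hjv : (j.val : ℤ) < (j'.val : ℤ) := by exact_mod_cast hj
    have hj2 := j'.isLt
    by_cases hr : r i = true
    · rw [if_pos hr]
      simp only [if_pos hr]
      exact (add_lt_add_iff_left _).mpr hjv
    · rw [if_neg hr]
      simp only [if_neg hr]
      exact (add_lt_add_iff_left _).mpr (by omega)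
  · intro i i' j hi
    have hiv : (i.val : ℤ) < (i'.val : ℤ) := by exact_mod_cast hi
    have hj := j.isLt
    have h1 : (0:ℤ) ≤ (if r i = true then (j.val : ℤ) else (n : ℤ) - 1 - j.val) := by
      split <;> omega
    have h2 : (if r i = true then (j.val : ℤ) else (n : ℤ) - 1 - j.val) < n := by
      split <;> omega
    have h3 : (0:ℤ) ≤ (if r i' = true then (j.val : ℤ) else (n : ℤ) - 1 - j.val) := by
      split <;> omega
    have h4 : (if r i' = true then (j.val : ℤ) else (n : ℤ) - 1 - j.val) < n := by
      split <;> omega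
    cases b
    · simp only [Bool.false_eq_true, if_false]
      exact addmul_lt h1 h4 (by omega)
    · simp only [if_true]
      exact addmul_lt h3 h2 (by omega)

lemma solvable_lt (n k l : ℕ) :
    Solvable n (fun i => decide (i.val < k)) (fun j => decide (j.val < l)) := by
  apply solvable_of_key _ _
    (fun p => ((2 * (k:ℤ) - 2 * p.1.val - 1) * (2 * p.2.val - 2 * (l:ℤ) + 1)) * n + p.1.val)
  · rintro ⟨i, j⟩ ⟨i', j'⟩ h
    simp only at h
    have hi := i.isLt; have hi' := i'.isLt
    obtain ⟨hA, hB⟩ := addmul_inj (by omega) (by omega) (by omega) (by omega) h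
    have hii : i = i' := Fin.ext (by omega)
    subst hii
    have hne : (2 * (k:ℤ) - 2 * i.val - 1) ≠ 0 := by omega
    have := mul_left_cancel₀ hne hA
    have hjj : j = j' := Fin.ext (by omega)
    rw [hjj]
  · intro i j j' hj
    have hjv : j.val < j'.val := hj
    have hi := i.isLt
    have hb : (2 * (j.val:ℤ) - 2 * l + 1) < (2 * (j'.val:ℤ) - 2 * l + 1) := by omega
    by_cases hik : i.val < k
    · rw [if_pos (by simpa using hik)]
      have ha : (0:ℤ) < 2 * (k:ℤ) - 2 * i.val - 1 := by omega
      exact addmul_lt (by omega) (by omega) (mul_lt_mul_of_pos_left hb ha)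
    · rw [if_neg (by simpa using hik)]
      have ha : (2 * (k:ℤ) - 2 * i.val - 1) < 0 := by omega
      exact addmul_lt (by omega) (by omega) (mul_lt_mul_of_neg_left hb ha)
  · intro i i' j hi
    have hiv : i.val < i'.val := hi
    have hi2 := i'.isLt; have hi1 := i.isLt
    have ha : (2 * (k:ℤ) - 2 * i'.val - 1) < (2 * (k:ℤ) - 2 * i.val - 1) := by omega
    by_cases hjl : j.val < l
    · rw [if_pos (by simpa using hjl)]
      have hb : (2 * (j.val:ℤ) - 2 * l + 1) < 0 := by omega
      exact addmul_lt (by omega) (by omega) (mul_lt_mul_of_neg_right ha hb)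
    · rw [if_neg (by simpa using hjl)]
      have hb : (0:ℤ) < (2 * (j.val:ℤ) - 2 * l + 1) := by omega
      exact addmul_lt (by omega) (by omega) (mul_lt_mul_of_pos_right ha hb)

lemma solvable_ge (n k l : ℕ) :
    Solvable n (fun i => decide (k ≤ i.val)) (fun j => decide (l ≤ j.val)) := by
  apply solvable_of_key _ _
    (fun p => ((2 * p.1.val - 2 * (k:ℤ) + 1) * (2 * p.2.val - 2 * (l:ℤ) + 1)) * n + p.1.val)
  · rintro ⟨i, j⟩ ⟨i', j'⟩ h
    simp only at h
    have hi := i.isLt; have hi' := i'.isLt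
    obtain ⟨hA, hB⟩ := addmul_inj (by omega) (by omega) (by omega) (by omega) h
    have hii : i = i' := Fin.ext (by omega)
    subst hii
    have hne : (2 * (i.val:ℤ) - 2 * k + 1) ≠ 0 := by omega
    have := mul_left_cancel₀ hne hA
    have hjj : j = j' := Fin.ext (by omega)
    rw [hjj]
  · intro i j j' hj
    have hjv : j.val < j'.val := hj
    have hi := i.isLt
    have hb : (2 * (j.val:ℤ) - 2 * l + 1) < (2 * (j'.val:ℤ) - 2 * l + 1) := by omega
    by_cases hik : k ≤ i.val
    · rw [if_pos (by simpa using hik)]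
      have ha : (0:ℤ) < 2 * (i.val:ℤ) - 2 * k + 1 := by omega
      exact addmul_lt (by omega) (by omega) (mul_lt_mul_of_pos_left hb ha)
    · rw [if_neg (by simpa using hik)]
      have ha : (2 * (i.val:ℤ) - 2 * k + 1) < 0 := by omega
      exact addmul_lt (by omega) (by omega) (mul_lt_mul_of_neg_left hb ha)
  · intro i i' j hi
    have hiv : i.val < i'.val := hi
    have hi2 := i'.isLt; have hi1 := i.isLt
    have ha : (2 * (i.val:ℤ) - 2 * k + 1) < (2 * (i'.val:ℤ) - 2 * k + 1) := by omega
    by_cases hjl : l ≤ j.val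
    · rw [if_pos (by simpa using hjl)]
      have hb : (0:ℤ) < (2 * (j.val:ℤ) - 2 * l + 1) := by omega
      exact addmul_lt (by omega) (by omega) (mul_lt_mul_of_pos_right ha hb)
    · rw [if_neg (by simpa using hjl)]
      have hb : (2 * (j.val:ℤ) - 2 * l + 1) < 0 := by omega
      exact addmul_lt (by omega) (by omega) (mul_lt_mul_of_neg_right ha hb)

/- ### Hamming and totalA computations -/

lemma totalA_le (n : ℕ) (s : Fin n → Bool) : totalA n s ≤ n := by
  classical
  calc totalA n s ≤ (Finset.univ : Finset (Fin n)).card := Finset.card_filter_le _ _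
  _ = n := by simp

lemma hamming_self (n : ℕ) (s : Fin n → Bool) : hamming n s s = 0 := by simp [hamming]

lemma hamming_false (n : ℕ) (s : Fin n → Bool) :
    hamming n s (fun _ => false) = totalA n s := by
  unfold hamming totalA
  congr 1
  apply Finset.filter_congr
  intro i _
  simp

lemma hamming_true (n : ℕ) (s : Fin n → Bool) :
    hamming n s (fun _ => true) = n - totalA n s := by
  classical
  have h := Finset.card_filter_add_card_filter_not
    (s := (Finset.univ : Finset (Fin n))) (p := fun i => s i = true)
  have h2 : hamming n s (fun _ => true) =
      (Finset.univ.filter fun i : Fin n => ¬ (s i = true)).card := by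
    unfold hamming
    congr 1
  have h3 : (Finset.univ : Finset (Fin n)).card = n := by simp
  unfold totalA
  omega

/- ### Structure lemmas for monotone strings -/

lemma eq_lt_of_not_DA {n : ℕ} (s : Fin n → Bool)
    (h : ∀ i i' : Fin n, i < i' → s i = false → s i' = true → False) :
    s = fun i => decide (i.val < totalA n s) := by
  classical
  funext i
  by_cases hi : s i = true
  · have hsub : Finset.Iic i ⊆ Finset.univ.filter (fun x => s x = true) := by
      intro x hx
      simp only [Finset.mem_Iic] at hx
      simp only [Finset.mem_filter, Finset.mem_univ, true_and]
      rcases eq_or_lt_of_le hx with hxe | hxl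
      · rw [show x = i from Fin.ext (by exact congrArg Fin.val hxe)]; exact hi
      · by_contra hxf
        exact h x i hxl (by simpa using hxf) hi
    have hc := Finset.card_le_card hsub
    rw [Fin.card_Iic] at hc
    rw [hi]
    have : i.val < totalA n s := by unfold totalA; omega
    simp [this]
  · have hf : s i = false := by simpa using hi
    have hsub : Finset.univ.filter (fun x => s x = true) ⊆ Finset.Iio i := by
      intro x hx
      simp only [Finset.mem_filter, Finset.mem_univ, true_and] at hx
      simp only [Finset.mem_Iio]
      by_contra hge
      push_neg at hge
      rcases eq_or_lt_of_le hge with he | hl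
      · rw [show x = i from Fin.ext (by exact (congrArg Fin.val he).symm)] at hx
        rw [hx] at hf; exact Bool.noConfusion hf
      · exact h i x hl hf hx
    have hc := Finset.card_le_card hsub
    rw [Fin.card_Iio] at hc
    rw [hf]
    have : ¬ (i.val < totalA n s) := by unfold totalA; omega
    simp [this]

lemma eq_ge_of_not_AD {n : ℕ} (s : Fin n → Bool)
    (h : ∀ i i' : Fin n, i < i' → s i = true → s i' = false → False) :
    s = fun i => decide (n - totalA n s ≤ i.val) := by
  classical
  have htot := totalA_le n s
  funext i
  have hin := i.isLt
  by_cases hi : s i = true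
  · have hsub : Finset.Ici i ⊆ Finset.univ.filter (fun x => s x = true) := by
      intro x hx
      simp only [Finset.mem_Ici] at hx
      simp only [Finset.mem_filter, Finset.mem_univ, true_and]
      rcases eq_or_lt_of_le hx with hxe | hxl
      · rw [show x = i from Fin.ext (by exact (congrArg Fin.val hxe).symm)]; exact hi
      · by_contra hxf
        exact h i x hxl hi (by simpa using hxf)
    have hc := Finset.card_le_card hsub
    rw [Fin.card_Ici] at hc
    rw [hi]
    have : n - totalA n s ≤ i.val := by unfold totalA; omega
    simp [this]
  · have hf : s i = false := by simpa using hi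
    have hsub : Finset.univ.filter (fun x => s x = true) ⊆ Finset.Ioi i := by
      intro x hx
      simp only [Finset.mem_filter, Finset.mem_univ, true_and] at hx
      simp only [Finset.mem_Ioi]
      by_contra hge
      push_neg at hge
      rcases eq_or_lt_of_le hge with he | hl
      · rw [show x = i from Fin.ext (by exact congrArg Fin.val he)] at hx
        rw [hx] at hf; exact Bool.noConfusion hf
      · exact h x i hl hx hf
    have hc := Finset.card_le_card hsub
    rw [Fin.card_Ioi] at hc
    rw [hf]
    have : ¬ (n - totalA n s ≤ i.val) := by unfold totalA; omega
    simp [this]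

lemma const_of_not {n : ℕ} (s : Fin n → Bool)
    (h1 : ¬ ∃ i i' : Fin n, i < i' ∧ s i = true ∧ s i' = false)
    (h2 : ¬ ∃ i i' : Fin n, i < i' ∧ s i = false ∧ s i' = true) :
    ∀ i i', s i = s i' := by
  intro i i'
  by_contra hne
  rcases lt_trichotomy i i' with h | h | h
  · cases hb : s i <;> cases hb' : s i'
    · rw [hb, hb'] at hne; exact hne rfl
    · exact h2 ⟨i, i', h, hb, hb'⟩
    · exact h1 ⟨i, i', h, hb, hb'⟩
    · rw [hb, hb'] at hne; exact hne rfl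
  · rw [h] at hne; exact hne rfl
  · cases hb : s i <;> cases hb' : s i'
    · rw [hb, hb'] at hne; exact hne rfl
    · exact h1 ⟨i', i, h, hb', hb⟩
    · exact h2 ⟨i', i, h, hb', hb⟩
    · rw [hb, hb'] at hne; exact hne rfl

/- ### Forbidden patterns for solvable puzzles -/

lemma no_bad {n : ℕ} {r c : Fin n → Bool} (h : Solvable n r c)
    {i1 i2 j1 j2 : Fin n} (hi : i1 < i2) (hj : j1 < j2)
    (h1 : r i1 = true) (h2 : r i2 = false) (h3 : c j1 = false) (h4 : c j2 = true) :
    False := by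
  obtain ⟨g, -, hr, hc⟩ := h
  have a1 : g (i1, j1) < g (i1, j2) := by
    have := hr i1; rw [if_pos h1] at this; exact this hj
  have a2 : g (i1, j2) < g (i2, j2) := by
    have := hc j2; rw [if_pos h4] at this; exact this hi
  have a3 : g (i2, j2) < g (i2, j1) := by
    have := hr i2; rw [if_neg (by simp [h2])] at this; exact this hj
  have a4 : g (i2, j1) < g (i1, j1) := by
    have := hc j1; rw [if_neg (by simp [h3])] at this; exact this hi
  exact lt_irrefl _ (a1.trans (a2.trans (a3.trans a4)))

lemma solvable_symm {n : ℕ} {r c : Fin n → Bool} (h : Solvable n r c) :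
    Solvable n c r := by
  obtain ⟨g, ⟨ginj, gsur⟩, hr, hc⟩ := h
  refine ⟨fun p => g (p.2, p.1), ⟨?_, ?_⟩, hc, hr⟩
  · intro p q hpq
    have := ginj hpq
    have h1 : p.2 = q.2 := congrArg Prod.fst this
    have h2 : p.1 = q.1 := congrArg Prod.snd this
    exact Prod.ext h2 h1
  · intro m
    obtain ⟨p, hp⟩ := gsur m
    exact ⟨(p.2, p.1), hp⟩

/- ### The main theorem -/

theorem nearest_solvable (n : ℕ) (hn : 2 ≤ n) (r c : Fin n → Bool) :
    sInf {m : ℕ | ∃ r' c' : Fin n → Bool, Solvable n r' c' ∧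
        m = hamming n r r' + hamming n c c'} =
      min (min (min (totalA n r) (n - totalA n r))
               (min (totalA n c) (n - totalA n c)))
          (min ((⨅ k : Fin (n + 1), hamming n r (fun i => decide (i.val < k.val))) +
                (⨅ ℓ : Fin (n + 1), hamming n c (fun j => decide (j.val < ℓ.val))))
               ((⨅ k : Fin (n + 1), hamming n r (fun i => decide (k.val ≤ i.val))) +
                (⨅ ℓ : Fin (n + 1), hamming n c (fun j => decide (ℓ.val ≤ j.val))))) := by
  classical
  set P := {m : ℕ | ∃ r' c' : Fin n → Bool, Solvable n r' c' ∧
      m = hamming n r r' + hamming n c c'} with hP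
  -- membership facts
  have mem1 : totalA n r ∈ P := by
    refine ⟨fun _ => false, c, solvable_row_const n false c, ?_⟩
    rw [hamming_false, hamming_self]
    omega
  have mem2 : n - totalA n r ∈ P := by
    refine ⟨fun _ => true, c, solvable_row_const n true c, ?_⟩
    rw [hamming_true, hamming_self]
    omega
  have mem3 : totalA n c ∈ P := by
    refine ⟨r, fun _ => false, solvable_col_const n false r, ?_⟩
    rw [hamming_false, hamming_self]
    omega
  have mem4 : n - totalA n c ∈ P := by
    refine ⟨r, fun _ => true, solvable_col_const n true r, ?_⟩
    rw [hamming_true, hamming_self]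
    omega
  obtain ⟨k1, hk1⟩ := Finite.exists_min
    (fun k : Fin (n+1) => hamming n r (fun i => decide (i.val < k.val)))
  obtain ⟨l1, hl1⟩ := Finite.exists_min
    (fun l : Fin (n+1) => hamming n c (fun j => decide (j.val < l.val)))
  obtain ⟨k2, hk2⟩ := Finite.exists_min
    (fun k : Fin (n+1) => hamming n r (fun i => decide (k.val ≤ i.val)))
  obtain ⟨l2, hl2⟩ := Finite.exists_min
    (fun l : Fin (n+1) => hamming n c (fun j => decide (l.val ≤ j.val)))
  have e1 : (⨅ k : Fin (n + 1), hamming n r (fun i => decide (i.val < k.val))) =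
      hamming n r (fun i => decide (i.val < k1.val)) :=
    le_antisymm (ciInf_le (OrderBot.bddBelow _) k1) (le_ciInf hk1)
  have e2 : (⨅ l : Fin (n + 1), hamming n c (fun j => decide (j.val < l.val))) =
      hamming n c (fun j => decide (j.val < l1.val)) :=
    le_antisymm (ciInf_le (OrderBot.bddBelow _) l1) (le_ciInf hl1)
  have e3 : (⨅ k : Fin (n + 1), hamming n r (fun i => decide (k.val ≤ i.val))) =
      hamming n r (fun i => decide (k2.val ≤ i.val)) :=
    le_antisymm (ciInf_le (OrderBot.bddBelow _) k2) (le_ciInf hk2)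
  have e4 : (⨅ l : Fin (n + 1), hamming n c (fun j => decide (l.val ≤ j.val))) =
      hamming n c (fun j => decide (l2.val ≤ j.val)) :=
    le_antisymm (ciInf_le (OrderBot.bddBelow _) l2) (le_ciInf hl2)
  have mem5 : (⨅ k : Fin (n + 1), hamming n r (fun i => decide (i.val < k.val))) +
      (⨅ l : Fin (n + 1), hamming n c (fun j => decide (j.val < l.val))) ∈ P := by
    refine ⟨fun i => decide (i.val < k1.val), fun j => decide (j.val < l1.val),
      solvable_lt n k1.val l1.val, ?_⟩
    rw [e1, e2]
  have mem6 : (⨅ k : Fin (n + 1), hamming n r (fun i => decide (k.val ≤ i.val))) +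
      (⨅ l : Fin (n + 1), hamming n c (fun j => decide (l.val ≤ j.val))) ∈ P := by
    refine ⟨fun i => decide (k2.val ≤ i.val), fun j => decide (l2.val ≤ j.val),
      solvable_ge n k2.val l2.val, ?_⟩
    rw [e3, e4]
  apply le_antisymm
  · have b1 := Nat.sInf_le mem1
    have b2 := Nat.sInf_le mem2
    have b3 := Nat.sInf_le mem3
    have b4 := Nat.sInf_le mem4
    have b5 := Nat.sInf_le mem5
    have b6 := Nat.sInf_le mem6
    omega
  · refine le_csInf ⟨_, mem1⟩ ?_
    rintro m ⟨r', c', hs, rfl⟩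
    have i0 : Fin n := ⟨0, by omega⟩
    by_cases hADr : ∃ i i' : Fin n, i < i' ∧ r' i = true ∧ r' i' = false
    · -- r' has A before D; then c' cannot have D before A
      have hDAc : ¬ ∃ j j' : Fin n, j < j' ∧ c' j = false ∧ c' j' = true := by
        rintro ⟨j, j', hj, hc1, hc2⟩
        obtain ⟨i, i', hi, hr1, hr2⟩ := hADr
        exact (no_bad hs hi hj hr1 hr2 hc1 hc2).elim
      by_cases hADc : ∃ j j' : Fin n, j < j' ∧ c' j = true ∧ c' j' = false
      · -- then r' cannot have D before A either; both have the form A^k D^(n-k)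
        have hDAr : ¬ ∃ i i' : Fin n, i < i' ∧ r' i = false ∧ r' i' = true := by
          rintro ⟨i, i', hi, hr1, hr2⟩
          obtain ⟨j, j', hj, hc1, hc2⟩ := hADc
          exact (no_bad (solvable_symm hs) hj hi hc1 hc2 hr1 hr2).elim
        have er := eq_lt_of_not_DA r' (fun i i' h hf ht => hDAr ⟨i, i', h, hf, ht⟩)
        have ec := eq_lt_of_not_DA c' (fun j j' h hf ht => hDAc ⟨j, j', h, hf, ht⟩)
        have b1 : (⨅ k : Fin (n + 1), hamming n r (fun i => decide (i.val < k.val))) ≤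
            hamming n r r' := by
          conv_rhs => rw [er]
          exact ciInf_le (OrderBot.bddBelow _)
            (⟨totalA n r', Nat.lt_succ_of_le (totalA_le n r')⟩ : Fin (n+1))
        have b2 : (⨅ l : Fin (n + 1), hamming n c (fun j => decide (j.val < l.val))) ≤
            hamming n c c' := by
          conv_rhs => rw [ec]
          exact ciInf_le (OrderBot.bddBelow _)
            (⟨totalA n c', Nat.lt_succ_of_le (totalA_le n c')⟩ : Fin (n+1))
        omega
      · -- c' is constant
        have hcc := const_of_not c' hADc hDAc
        have hform : c' = fun _ => c' i0 := funext fun j => hcc j i0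
        cases hb : c' i0
        · have hcomp : hamming n c c' = totalA n c := by
            rw [hform, hb, hamming_false]
          omega
        · have hcomp : hamming n c c' = n - totalA n c := by
            rw [hform, hb, hamming_true]
          omega
    · by_cases hDAr : ∃ i i' : Fin n, i < i' ∧ r' i = false ∧ r' i' = true
      · have hADc : ¬ ∃ j j' : Fin n, j < j' ∧ c' j = true ∧ c' j' = false := by
          rintro ⟨j, j', hj, hc1, hc2⟩
          obtain ⟨i, i', hi, hr1, hr2⟩ := hDAr
          exact (no_bad (solvable_symm hs) hj hi hc1 hc2 hr1 hr2).elim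
        by_cases hDAc : ∃ j j' : Fin n, j < j' ∧ c' j = false ∧ c' j' = true
        · -- both have the form D^k A^(n-k)
          have er := eq_ge_of_not_AD r' (fun i i' h ht hf => hADr ⟨i, i', h, ht, hf⟩)
          have ec := eq_ge_of_not_AD c' (fun j j' h ht hf => hADc ⟨j, j', h, ht, hf⟩)
          have b1 : (⨅ k : Fin (n + 1), hamming n r (fun i => decide (k.val ≤ i.val))) ≤
              hamming n r r' := by
            conv_rhs => rw [er]
            exact ciInf_le (OrderBot.bddBelow _) (⟨n - totalA n r', by omega⟩ : Fin (n+1))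
          have b2 : (⨅ l : Fin (n + 1), hamming n c (fun j => decide (l.val ≤ j.val))) ≤
              hamming n c c' := by
            conv_rhs => rw [ec]
            exact ciInf_le (OrderBot.bddBelow _) (⟨n - totalA n c', by omega⟩ : Fin (n+1))
          omega
        · -- c' is constant
          have hcc := const_of_not c' hADc hDAc
          have hform : c' = fun _ => c' i0 := funext fun j => hcc j i0
          cases hb : c' i0
          · have hcomp : hamming n c c' = totalA n c := by
              rw [hform, hb, hamming_false]
            omega
          · have hcomp : hamming n c c' = n - totalA n c := by
              rw [hform, hb, hamming_true]
            omega
      · -- r' is constant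
        have hcc := const_of_not r' hADr hDAr
        have hform : r' = fun _ => r' i0 := funext fun i => hcc i i0
        cases hb : r' i0
        · have hcomp : hamming n r r' = totalA n r := by
            rw [hform, hb, hamming_false]
          omega
        · have hcomp : hamming n r r' = n - totalA n r := by
            rw [hform, hb, hamming_true]
          omega
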